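/- arXiv:1311.7267 — 5 statements merged into one kernel-verified Lean document; each statement's English description precedes it below -/
import Mathlib

section
/- Let L = c(n₁) × ⋯ × c(n_t) be a finite product of chain lattices, and let β be a maximal join-irreducible of L, say β has the top element of the first chain in coordinate 1 and bottom elsewhere. Let B_β = {γ ∈ L : γ ≥ β}. For any α ∈ L with α ∉ B_β, and for every b₁ ∈ B_β other than b := α ∨ β, there exists a diamond D = {u, v, u∨v, u∧v} in L containing both α and b₁. Consequently |E_α \ E_α(L_β)| ≥ |B_β| − 1. -/
/-- `a` and `b` lie in a common diamond of the lattice, the whole diamond being contained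
in the subset `S`. -/
def InDiamond {L : Type*} [Lattice L] (a b : L) (S : Set L) : Prop :=
  ∃ x y : L, ¬ x ≤ y ∧ ¬ y ≤ x ∧ ({x, y, x ⊔ y, x ⊓ y} : Set L) ⊆ S ∧
    a ∈ ({x, y, x ⊔ y, x ⊓ y} : Set L) ∧ b ∈ ({x, y, x ⊔ y, x ⊓ y} : Set L)

/-- In a product of chains `L = c(n₀+1) × ⋯`, with `β` the maximal join-irreducible having
the top of the first chain in coordinate `0` and bottom elsewhere, and `α ∉ B_β = {γ : γ ≥ β}`:
for every `b₁ ∈ B_β` with `b₁ ≠ α ⊔ β` there is a diamond containing both `α` and `b₁`;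
consequently `|E_α \ E_α(L_β)| ≥ |B_β| − 1`. -/
theorem stmt9 {t : ℕ} (n : Fin (t + 1) → ℕ) (hn : 1 ≤ n 0)
    (β : ∀ i, Fin (n i + 1))
    (hβdef : β = fun i => if i = 0 then Fin.last (n i) else 0)
    (hβirr : SupIrred β ∧ ∀ γ : ∀ i, Fin (n i + 1), SupIrred γ → ¬ β < γ)
    (α : ∀ i, Fin (n i + 1)) (hα : ¬ β ≤ α) :
    (∀ b₁ : ∀ i, Fin (n i + 1), β ≤ b₁ → b₁ ≠ α ⊔ β →
      ∃ u v : ∀ i, Fin (n i + 1), ¬ u ≤ v ∧ ¬ v ≤ u ∧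
        α ∈ ({u, v, u ⊔ v, u ⊓ v} : Set (∀ i, Fin (n i + 1))) ∧
        b₁ ∈ ({u, v, u ⊔ v, u ⊓ v} : Set (∀ i, Fin (n i + 1)))) ∧
    {γ : ∀ i, Fin (n i + 1) | InDiamond α γ Set.univ ∧
        ¬ InDiamond α γ {δ : ∀ i, Fin (n i + 1) | ¬ β ≤ δ}}.ncard ≥
      {γ : ∀ i, Fin (n i + 1) | β ≤ γ}.ncard - 1 := by
  have hβ0 : β 0 = Fin.last (n 0) := by rw [hβdef]; simp
  have hβi : ∀ i, i ≠ 0 → β i = 0 := by intro i hi; rw [hβdef]; simp [hi]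
  have hα0 : ¬ (Fin.last (n 0) ≤ α 0) := by
    intro h
    apply hα
    intro i
    by_cases hi : i = 0
    · subst hi; rw [hβ0]; exact h
    · rw [hβi i hi]; exact Fin.zero_le _
  have key : ∀ b₁ : ∀ i, Fin (n i + 1), β ≤ b₁ → b₁ ≠ α ⊔ β →
      ∃ u v : ∀ i, Fin (n i + 1), ¬ u ≤ v ∧ ¬ v ≤ u ∧
        α ∈ ({u, v, u ⊔ v, u ⊓ v} : Set (∀ i, Fin (n i + 1))) ∧
        b₁ ∈ ({u, v, u ⊔ v, u ⊓ v} : Set (∀ i, Fin (n i + 1))) := by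
    intro b₁ hb₁ hne
    have hb₁0 : b₁ 0 = Fin.last (n 0) := by
      refine le_antisymm (Fin.le_last _) ?_
      have := hb₁ 0; rwa [hβ0] at this
    by_cases hab : α ≤ b₁
    · -- α ≤ b₁ : use u = α ⊔ β, v = b₁ with coord 0 replaced by α 0
      refine ⟨α ⊔ β, Function.update b₁ 0 (α 0), ?_, ?_, ?_, ?_⟩
      · intro hle
        have := hle 0
        simp only [Pi.sup_apply, hβ0, Function.update_self] at this
        exact hα0 (le_trans le_sup_right this)
      · intro hle
        apply hne
        funext i
        by_cases hi : i = 0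
        · subst hi
          simp [Pi.sup_apply, hβ0, hb₁0, sup_eq_right.mpr (Fin.le_last _), Fin.le_last]
        · have h1 := hle i
          simp only [Function.update_of_ne hi, Pi.sup_apply, hβi i hi] at h1 ⊢
          have : b₁ i ≤ α i := le_trans h1 (by simp)
          simp [le_antisymm this (hab i)]
      · -- α = u ⊓ v
        have : (α ⊔ β) ⊓ (Function.update b₁ 0 (α 0)) = α := by
          funext i
          by_cases hi : i = 0
          · subst hi
            simp [Pi.inf_apply, Pi.sup_apply, hβ0, sup_eq_right.mpr (Fin.le_last _),
              inf_eq_right.mpr (Fin.le_last _)]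
          · simp [Pi.inf_apply, Pi.sup_apply, hβi i hi, Function.update_of_ne hi,
              inf_eq_left.mpr (hab i)]
        right; right; right
        exact this.symm
      · -- b₁ = u ⊔ v
        have : (α ⊔ β) ⊔ (Function.update b₁ 0 (α 0)) = b₁ := by
          funext i
          by_cases hi : i = 0
          · subst hi
            simp [Pi.sup_apply, hβ0, hb₁0, sup_eq_right.mpr (Fin.le_last _),
              sup_eq_left.mpr (Fin.le_last _)]
          · simp [Pi.sup_apply, hβi i hi, Function.update_of_ne hi,
              sup_eq_right.mpr (hab i)]
        right; right; left
        exact this.symm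
    · refine ⟨α, b₁, hab, ?_, by left; rfl, by right; left; rfl⟩
      intro hle
      exact hα (le_trans hb₁ hle)
  refine ⟨key, ?_⟩
  have hsub : {γ : ∀ i, Fin (n i + 1) | β ≤ γ} \ {α ⊔ β} ⊆
      {γ : ∀ i, Fin (n i + 1) | InDiamond α γ Set.univ ∧
        ¬ InDiamond α γ {δ : ∀ i, Fin (n i + 1) | ¬ β ≤ δ}} := by
    rintro γ ⟨hγ1, hγ2⟩
    obtain ⟨u, v, h1, h2, h3, h4⟩ := key γ hγ1 hγ2
    constructor
    · exact ⟨u, v, h1, h2, Set.subset_univ _, h3, h4⟩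
    · rintro ⟨u', v', _, _, hS, _, hγ⟩
      exact (hS hγ) hγ1
  have hfin : ({γ : ∀ i, Fin (n i + 1) | β ≤ γ}).Finite := Set.toFinite _
  have h1 := Set.ncard_diff_singleton_add_one (show α ⊔ β ∈ {γ : ∀ i, Fin (n i + 1) | β ≤ γ} from (le_sup_right : β ≤ α ⊔ β)) hfin
  have h2 := Set.ncard_le_ncard hsub (Set.toFinite _)
  omega
end

section
/- Let L be a finite product of chain lattices, α ∈ L not the maximum of L, and β a maximal join-irreducible of L with β ≰ α. Then the count |E_α| − |E_α(L_β)| of pairs (α, γ) lying in a common diamond whose diamond is not entirely contained in L_β = {γ : γ ≱ β} is at least |L| − |L_β| − 1, i.e., at least |{γ ∈ L : γ ≥ β}| − 1. -/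
/-- In a finite product of chain lattices, for `α` not the maximum and `β` a maximal
join-irreducible with `β ≰ α`, the number of `γ` sharing a diamond with `α` where no such
shared diamond lies entirely within `L_β = {δ : δ ≱ β}` is at least `|{γ : γ ≥ β}| − 1
= |L| − |L_β| − 1`. -/
theorem stmt11 {t : ℕ} (n : Fin t → ℕ) (α β : ∀ i, Fin (n i + 1))
    (hα : α ≠ ⊤)
    (hβ : SupIrred β ∧ ∀ γ : ∀ i, Fin (n i + 1), SupIrred γ → ¬ β < γ)
    (hβα : ¬ β ≤ α) :
    {γ : ∀ i, Fin (n i + 1) | InDiamond α γ Set.univ ∧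
        ¬ InDiamond α γ {δ : ∀ i, Fin (n i + 1) | ¬ β ≤ δ}}.ncard ≥
      {γ : ∀ i, Fin (n i + 1) | β ≤ γ}.ncard - 1 := by
  classical
  obtain ⟨⟨hne, hsup⟩, hmax⟩ := hβ
  -- β is supported at a single coordinate i₀
  have hβbot : β ≠ ⊥ := by rintro rfl; exact hne isMin_bot
  have hex : ∃ i₀, β i₀ ≠ 0 := by
    by_contra h
    push_neg at h
    exact hβbot (funext fun i => by simp [h i, Pi.bot_apply, Fin.bot_eq_zero])
  obtain ⟨i₀, hi₀⟩ := hex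
  have hzero : ∀ j, j ≠ i₀ → β j = 0 := by
    intro j hj
    by_contra hbj
    have hbc : Function.update β i₀ 0 ⊔ Function.update (⊥ : ∀ i, Fin (n i + 1)) i₀ (β i₀) = β := by
      funext i
      by_cases h : i = i₀
      · subst h; simp [Pi.sup_apply]
      · simp [Pi.sup_apply, Function.update_of_ne h]
    rcases hsup hbc with h | h
    · exact hi₀ (by rw [← h]; simp)
    · exact hbj (by rw [← h]; simp [Function.update_of_ne hj, Fin.bot_eq_zero])
  -- by maximality, β i₀ = Fin.last
  have hlast : β i₀ = Fin.last (n i₀) := by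
    by_contra hne'
    have hlt : (β i₀ : ℕ) < n i₀ := by
      have h1 := (β i₀).isLt
      have h2 : (β i₀ : ℕ) ≠ n i₀ := fun h => hne' (Fin.ext (by simp [h]))
      omega
    set c : Fin (n i₀ + 1) := ⟨(β i₀ : ℕ) + 1, by omega⟩ with hc
    set γ : ∀ i, Fin (n i + 1) := Function.update β i₀ c with hγ
    have hγzero : ∀ j, j ≠ i₀ → γ j = 0 := fun j hj => by
      simp [hγ, Function.update_of_ne hj, hzero j hj]
    have hγi₀ : γ i₀ = c := by simp [hγ]
    have hγirr : SupIrred γ := by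
      constructor
      · intro h
        have h2 := h (bot_le : (⊥ : ∀ i, Fin (n i + 1)) ≤ γ)
        have h3 := h2 i₀
        rw [hγi₀] at h3
        have : ((β i₀ : ℕ) + 1) ≤ 0 := h3
        omega
      · intro b d hbd
        have hb : b ≤ γ := hbd ▸ le_sup_left
        have hd : d ≤ γ := hbd ▸ le_sup_right
        have hi := congrFun hbd i₀
        rw [Pi.sup_apply, hγi₀] at hi
        rcases le_total (b i₀) (d i₀) with h | h
        · right
          funext j
          by_cases hj : j = i₀
          · subst hj; rw [hγi₀, ← hi, sup_eq_right.2 h]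
          · have := hd j
            rw [hγzero j hj] at this ⊢
            exact le_antisymm this (Fin.zero_le _)
        · left
          funext j
          by_cases hj : j = i₀
          · subst hj; rw [hγi₀, ← hi, sup_eq_left.2 h]
          · have := hb j
            rw [hγzero j hj] at this ⊢
            exact le_antisymm this (Fin.zero_le _)
    have hβγ : β < γ := by
      constructor
      · intro j
        by_cases hj : j = i₀
        · subst hj; rw [hγi₀]; exact Fin.le_def.2 (by simp [hc])
        · rw [hγzero j hj, hzero j hj]
      · intro h
        have := h i₀
        rw [hγi₀] at this
        have : (β i₀ : ℕ) ≥ (β i₀ : ℕ) + 1 := this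
        omega
    exact hmax γ hγirr hβγ
  -- characterization of β ≤ δ
  have hβle : ∀ δ : ∀ i, Fin (n i + 1), β ≤ δ ↔ δ i₀ = Fin.last (n i₀) := by
    intro δ
    constructor
    · intro h
      have := h i₀
      rw [hlast] at this
      exact Fin.last_le_iff.1 this
    · intro h i
      by_cases hi : i = i₀
      · subst hi; rw [h, hlast]
      · rw [hzero i hi]; exact Fin.zero_le _
  have hαi : α i₀ < Fin.last (n i₀) :=
    lt_of_le_of_ne (Fin.le_last _) (fun h => hβα ((hβle α).2 h))
  -- every γ ≥ β with γ ≠ α ⊔ β shares a diamond with α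
  have hmain : ∀ γ : ∀ i, Fin (n i + 1), β ≤ γ → γ ≠ α ⊔ β → InDiamond α γ Set.univ := by
    intro γ hγ hneq
    by_cases hαγ : α ≤ γ
    · -- α ≤ γ : diamond {α⊔β, y, γ, α} with y = update γ i₀ (α i₀)
      set x : ∀ i, Fin (n i + 1) := α ⊔ β with hx
      set y : ∀ i, Fin (n i + 1) := Function.update γ i₀ (α i₀) with hy
      have hxj : ∀ j, j ≠ i₀ → x j = α j := by
        intro j hj; rw [hx, Pi.sup_apply, hzero j hj, sup_eq_left.2 (Fin.zero_le _)]
      have hxi : x i₀ = Fin.last (n i₀) := by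
        rw [hx, Pi.sup_apply, hlast, sup_eq_right.2 (Fin.le_last _)]
      have hγi : γ i₀ = Fin.last (n i₀) := (hβle γ).1 hγ
      have hxγ : x ≤ γ := sup_le hαγ hγ
      have hexj : ∃ j, j ≠ i₀ ∧ α j < γ j := by
        by_contra h
        push_neg at h
        apply hneq
        funext j
        by_cases hj : j = i₀
        · subst hj; rw [hγi, ← hxi]
        · exact le_antisymm (by rw [hxj j hj]; exact h j hj) (hxγ j)
      obtain ⟨j, hj, hjlt⟩ := hexj
      refine ⟨x, y, ?_, ?_, fun _ _ => Set.mem_univ _, ?_, ?_⟩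
      · intro h
        have := h i₀
        rw [hxi, hy, Function.update_self] at this
        exact absurd (Fin.last_le_iff.1 this) (ne_of_lt hαi)
      · intro h
        have := h j
        rw [hy, Function.update_of_ne hj, hxj j hj] at this
        exact absurd this (not_le_of_gt hjlt)
      · -- α = x ⊓ y
        have : α = x ⊓ y := by
          funext i
          by_cases hi : i = i₀
          · subst hi
            rw [Pi.inf_apply, hy, Function.update_self, hxi,
              inf_eq_right.2 (Fin.le_last _)]
          · rw [Pi.inf_apply, hy, Function.update_of_ne hi, hxj i hi,
              inf_eq_left.2 (hαγ i)]
        rw [this]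
        right; right; right; rfl
      · -- γ = x ⊔ y
        have : γ = x ⊔ y := by
          funext i
          by_cases hi : i = i₀
          · subst hi
            rw [Pi.sup_apply, hy, Function.update_self, hxi, hγi,
              sup_eq_left.2 (Fin.le_last _)]
          · rw [Pi.sup_apply, hy, Function.update_of_ne hi, hxj i hi,
              sup_eq_right.2 (hαγ i)]
        rw [this]
        right; right; left; rfl
    · -- α and γ incomparable
      have hγα : ¬ γ ≤ α := fun h => hβα (hγ.trans h)
      exact ⟨α, γ, hαγ, hγα, fun _ _ => Set.mem_univ _, Or.inl rfl, Or.inr (Or.inl rfl)⟩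
  -- γ ≥ β kills the L_β condition
  have hkill : ∀ γ : ∀ i, Fin (n i + 1), β ≤ γ →
      ¬ InDiamond α γ {δ : ∀ i, Fin (n i + 1) | ¬ β ≤ δ} := by
    rintro γ hγ ⟨x, y, _, _, hsub, _, hγmem⟩
    exact (hsub hγmem) hγ
  -- counting
  have hsubset : {γ : ∀ i, Fin (n i + 1) | β ≤ γ} \ {α ⊔ β} ⊆
      {γ : ∀ i, Fin (n i + 1) | InDiamond α γ Set.univ ∧
        ¬ InDiamond α γ {δ : ∀ i, Fin (n i + 1) | ¬ β ≤ δ}} := by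
    rintro γ ⟨hγ, hγ2⟩
    exact ⟨hmain γ hγ (by simpa using hγ2), hkill γ hγ⟩
  have h1 : ({γ : ∀ i, Fin (n i + 1) | β ≤ γ} \ {α ⊔ β}).ncard =
      {γ : ∀ i, Fin (n i + 1) | β ≤ γ}.ncard - 1 :=
    Set.ncard_diff_singleton_of_mem (le_sup_right : β ≤ α ⊔ β)
  calc {γ : ∀ i, Fin (n i + 1) | InDiamond α γ Set.univ ∧
        ¬ InDiamond α γ {δ : ∀ i, Fin (n i + 1) | ¬ β ≤ δ}}.ncard
      ≥ ({γ : ∀ i, Fin (n i + 1) | β ≤ γ} \ {α ⊔ β}).ncard :=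
        Set.ncard_le_ncard hsubset (Set.toFinite _)
    _ = {γ : ∀ i, Fin (n i + 1) | β ≤ γ}.ncard - 1 := h1
end

section
/- Let L be a finite distributive lattice and β a maximal join-irreducible of L. For any α ∈ L with β ≰ α, and any diamond D = {x, y, x∨y, x∧y} of L containing α and with at least one element of D in B_β = {γ : γ ≥ β}, exactly two elements of D lie in B_β, and these two elements are comparable in L. -/
/-- In a finite distributive lattice with `β` a maximal join-irreducible, for `α` with
`β ≰ α` and a diamond `{x, y, x⊔y, x⊓y}` containing `α` with at least one element in
`B_β = {γ : γ ≥ β}`, exactly two elements of the diamond lie in `B_β`, and these two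
elements are comparable. -/
theorem stmt13 {L : Type*} [DistribLattice L] [Fintype L] (β : L)
    (hβ : SupIrred β ∧ ∀ γ : L, SupIrred γ → ¬ β < γ)
    (α x y : L) (hβα : ¬ β ≤ α) (hxy : ¬ x ≤ y ∧ ¬ y ≤ x)
    (hα : α ∈ ({x, y, x ⊔ y, x ⊓ y} : Set L))
    (hB : ∃ d ∈ ({x, y, x ⊔ y, x ⊓ y} : Set L), β ≤ d) :
    {d ∈ ({x, y, x ⊔ y, x ⊓ y} : Set L) | β ≤ d}.ncard = 2 ∧
    ∀ d₁ ∈ ({x, y, x ⊔ y, x ⊓ y} : Set L), ∀ d₂ ∈ ({x, y, x ⊔ y, x ⊓ y} : Set L),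
      β ≤ d₁ → β ≤ d₂ → d₁ ≤ d₂ ∨ d₂ ≤ d₁ := by
  have hprime : SupPrime β := hβ.1.supPrime
  -- x ⊓ y is below every element of the diamond, in particular α
  have hmα : x ⊓ y ≤ α := by
    rcases hα with rfl | rfl | rfl | rfl
    · exact inf_le_left
    · exact inf_le_right
    · exact inf_le_left.trans le_sup_left
    · exact le_rfl
  have hm : ¬ β ≤ x ⊓ y := fun h => hβα (h.trans hmα)
  -- not both x and y are above β
  have hnotboth : ¬ (β ≤ x ∧ β ≤ y) := fun h => hm (le_inf h.1 h.2)
  -- from hB, β ≤ x or β ≤ y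
  have hxor : β ≤ x ∨ β ≤ y := by
    obtain ⟨d, hd, hβd⟩ := hB
    rcases hd with rfl | rfl | rfl | rfl
    · exact Or.inl hβd
    · exact Or.inr hβd
    · exact hprime.2 hβd
    · exact absurd hβd hm
  rcases hxor with hx | hy
  · have hny : ¬ β ≤ y := fun h => hnotboth ⟨hx, h⟩
    have hset : {d ∈ ({x, y, x ⊔ y, x ⊓ y} : Set L) | β ≤ d} = {x, x ⊔ y} := by
      ext d
      simp only [Set.mem_setOf_eq, Set.mem_insert_iff, Set.mem_singleton_iff]
      constructor
      · rintro ⟨rfl | rfl | rfl | rfl, hβd⟩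
        · exact Or.inl rfl
        · exact absurd hβd hny
        · exact Or.inr rfl
        · exact absurd hβd hm
      · rintro (rfl | rfl)
        · exact ⟨Or.inl rfl, hx⟩
        · exact ⟨Or.inr (Or.inr (Or.inl rfl)), hx.trans le_sup_left⟩
    constructor
    · rw [hset, Set.ncard_pair]
      exact fun h => hxy.2 (le_sup_right.trans h.ge)
    · intro d₁ hd₁ d₂ hd₂ h₁ h₂
      have e₁ : d₁ = x ∨ d₁ = x ⊔ y := by
        have : d₁ ∈ ({x, x ⊔ y} : Set L) := hset ▸ ⟨hd₁, h₁⟩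
        simpa using this
      have e₂ : d₂ = x ∨ d₂ = x ⊔ y := by
        have : d₂ ∈ ({x, x ⊔ y} : Set L) := hset ▸ ⟨hd₂, h₂⟩
        simpa using this
      rcases e₁ with rfl | rfl <;> rcases e₂ with rfl | rfl
      · exact Or.inl le_rfl
      · exact Or.inl le_sup_left
      · exact Or.inr le_sup_left
      · exact Or.inl le_rfl
  · have hnx : ¬ β ≤ x := fun h => hnotboth ⟨h, hy⟩
    have hset : {d ∈ ({x, y, x ⊔ y, x ⊓ y} : Set L) | β ≤ d} = {y, x ⊔ y} := by
      ext d
      simp only [Set.mem_setOf_eq, Set.mem_insert_iff, Set.mem_singleton_iff]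
      constructor
      · rintro ⟨rfl | rfl | rfl | rfl, hβd⟩
        · exact absurd hβd hnx
        · exact Or.inl rfl
        · exact Or.inr rfl
        · exact absurd hβd hm
      · rintro (rfl | rfl)
        · exact ⟨Or.inr (Or.inl rfl), hy⟩
        · exact ⟨Or.inr (Or.inr (Or.inl rfl)), hy.trans le_sup_right⟩
    constructor
    · rw [hset, Set.ncard_pair]
      exact fun h => hxy.1 (le_sup_left.trans h.ge)
    · intro d₁ hd₁ d₂ hd₂ h₁ h₂
      have e₁ : d₁ = y ∨ d₁ = x ⊔ y := by
        have : d₁ ∈ ({y, x ⊔ y} : Set L) := hset ▸ ⟨hd₁, h₁⟩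
        simpa using this
      have e₂ : d₂ = y ∨ d₂ = x ⊔ y := by
        have : d₂ ∈ ({y, x ⊔ y} : Set L) := hset ▸ ⟨hd₂, h₂⟩
        simpa using this
      rcases e₁ with rfl | rfl <;> rcases e₂ with rfl | rfl
      · exact Or.inl le_rfl
      · exact Or.inl le_sup_right
      · exact Or.inr le_sup_right
      · exact Or.inl le_rfl
end

section
/- Let L be a finite distributive lattice, β a maximal join-irreducible, and β₁ a join-irreducible covered by β in J(L) (assuming the join-irreducibles below β form a chain so β₁ is unique). Then the map φ(x) = x ∨ β is an order isomorphism from B_{β₁}(L_β) = {x ∈ L_β : x ≥ β₁} onto B_β = {γ ∈ L : γ ≥ β}, where L_β = {γ ∈ L : γ ≱ β}. -/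
/-- In a finite distributive lattice, let `β` be a maximal join-irreducible and `β₁` the
(unique) join-irreducible covered by `β` in `J(L)` (the join-irreducibles below `β` forming
a chain). Then `x ↦ x ⊔ β` is an order isomorphism from
`B_{β₁}(L_β) = {x : β ≰ x and β₁ ≤ x}` onto `B_β = {γ : β ≤ γ}`. -/
theorem stmt14 {L : Type*} [DistribLattice L] [Fintype L] (β β₁ : L)
    (hβ : SupIrred β ∧ ∀ γ : L, SupIrred γ → ¬ β < γ)
    (hβ₁ : SupIrred β₁ ∧ β₁ < β ∧ ∀ δ : L, SupIrred δ → ¬ (β₁ < δ ∧ δ < β))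
    (hchain : ∀ γ δ : L, SupIrred γ → SupIrred δ → γ < β → δ < β → γ ≤ δ ∨ δ ≤ γ) :
    ∃ e : {x : L // ¬ β ≤ x ∧ β₁ ≤ x} ≃o {γ : L // β ≤ γ},
      ∀ x, (e x : L) = (x : L) ⊔ β := by
  classical
  obtain ⟨hβi, hβmax⟩ := hβ
  obtain ⟨hβ₁i, hβ₁lt, hβ₁cov⟩ := hβ₁
  have : Nonempty L := ⟨β⟩
  letI : OrderBot L := Fintype.toOrderBot L
  -- every sup-irreducible strictly below β is ≤ β₁
  have key : ∀ p : L, SupIrred p → p < β → p ≤ β₁ := by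
    intro p hp hpβ
    rcases hchain p β₁ hp hβ₁i hpβ hβ₁lt with h | h
    · exact h
    · rcases eq_or_lt_of_le h with rfl | h'
      · exact le_rfl
      · exact absurd ⟨h', hpβ⟩ (hβ₁cov p hp)
  -- order reflection
  have refl : ∀ x y : L, ¬ β ≤ x → β₁ ≤ y → x ⊔ β ≤ y ⊔ β → x ≤ y := by
    intro x y hx hy h
    obtain ⟨s, hs, hirr⟩ := exists_supIrred_decomposition x
    rw [← hs]
    apply Finset.sup_le
    intro p hp
    have hpirr := hirr hp
    have hpx : p ≤ x := hs ▸ Finset.le_sup (f := id) hp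
    have hpy : p ≤ y ⊔ β := le_trans (hpx.trans le_sup_left) h
    rcases (hpirr.supPrime.le_sup).1 hpy with h' | h'
    · exact h'
    · have hlt : p < β := lt_of_le_of_ne h' (by rintro rfl; exact hx hpx)
      exact (key p hpirr hlt).trans hy
  -- inverse map
  set ψ : L → L := fun γ => (Finset.univ.filter
      (fun p => SupIrred p ∧ p ≤ γ ∧ p ≠ β)).sup id with hψ
  have hψβ₁ : ∀ γ : L, β ≤ γ → β₁ ≤ ψ γ := by
    intro γ hγ
    exact Finset.le_sup (f := id) (by
      simp only [Finset.mem_filter, Finset.mem_univ, true_and]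
      exact ⟨hβ₁i, hβ₁lt.le.trans hγ, hβ₁lt.ne⟩)
  have hψnotβ : ∀ γ : L, ¬ β ≤ ψ γ := by
    intro γ hle
    obtain ⟨p, hpmem, hβp⟩ := (hβi.supPrime.le_finset_sup).1 hle
    simp only [Finset.mem_filter, Finset.mem_univ, true_and] at hpmem
    obtain ⟨hpirr, -, hpne⟩ := hpmem
    exact hβmax p hpirr (lt_of_le_of_ne hβp (Ne.symm hpne))
  have hψsup : ∀ γ : L, β ≤ γ → ψ γ ⊔ β = γ := by
    intro γ hγ
    apply le_antisymm
    · refine sup_le ?_ hγ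
      refine Finset.sup_le fun p hp => ?_
      simp only [Finset.mem_filter, Finset.mem_univ, true_and] at hp
      exact hp.2.1
    · obtain ⟨s, hs, hirr⟩ := exists_supIrred_decomposition γ
      conv_lhs => rw [← hs]
      refine Finset.sup_le fun p hp => ?_
      have hpirr := hirr hp
      have hpγ : p ≤ γ := hs ▸ Finset.le_sup (f := id) hp
      by_cases hpe : p = β
      · exact hpe.le.trans le_sup_right
      · exact le_sup_of_le_left (Finset.le_sup (f := id) (by
          simp only [Finset.mem_filter, Finset.mem_univ, true_and]
          exact ⟨hpirr, hpγ, hpe⟩))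
  refine ⟨{ toFun := fun x => ⟨(x : L) ⊔ β, le_sup_right⟩
            invFun := fun γ => ⟨ψ γ, hψnotβ γ, hψβ₁ γ γ.2⟩
            left_inv := ?_
            right_inv := ?_
            map_rel_iff' := ?_ }, fun x => rfl⟩
  · rintro ⟨x, hx1, hx2⟩
    have h1 : ψ (x ⊔ β) ⊔ β = x ⊔ β := hψsup _ le_sup_right
    refine Subtype.ext ?_
    exact le_antisymm
      (refl _ _ (hψnotβ _) hx2 h1.le)
      (refl _ _ hx1 (hψβ₁ _ le_sup_right) h1.ge)
  · rintro ⟨γ, hγ⟩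
    exact Subtype.ext (hψsup γ hγ)
  · rintro ⟨x, hx1, hx2⟩ ⟨y, hy1, hy2⟩
    constructor
    · intro h
      exact refl x y hx1 hy2 h
    · intro h
      exact sup_le_sup_right h β
end

section
/- Let L = c(m) × c(n) be the product of two finite chains with m, n ≥ 2, and α = (a, b) ∈ L. Then the number of γ ∈ L such that α and γ lie in a common diamond of L equals or exceeds (m−1)(n−1) = |L| − |J(L)|, where |L| = mn and |J(L)| = (m−1) + (n−1). -/
/-- In `L = c(m) × c(n)` with `m, n ≥ 2`, for any `α` the number of `γ` lying in a common
diamond with `α` is at least `(m−1)(n−1) = |L| − |J(L)|`. -/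
theorem stmt17 (m n : ℕ) (hm : 2 ≤ m) (hn : 2 ≤ n) (α : Fin m × Fin n) :
    {γ : Fin m × Fin n | ∃ x y : Fin m × Fin n, ¬ x ≤ y ∧ ¬ y ≤ x ∧
        α ∈ ({x, y, x ⊔ y, x ⊓ y} : Set (Fin m × Fin n)) ∧
        γ ∈ ({x, y, x ⊔ y, x ⊓ y} : Set (Fin m × Fin n))}.ncard ≥
      (m - 1) * (n - 1) := by
  obtain ⟨a, b⟩ := α
  have hsub : {γ : Fin m × Fin n | γ.1 ≠ a ∧ γ.2 ≠ b} ⊆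
      {γ : Fin m × Fin n | ∃ x y : Fin m × Fin n, ¬ x ≤ y ∧ ¬ y ≤ x ∧
        (a, b) ∈ ({x, y, x ⊔ y, x ⊓ y} : Set (Fin m × Fin n)) ∧
        γ ∈ ({x, y, x ⊔ y, x ⊓ y} : Set (Fin m × Fin n))} := by
    rintro ⟨c, d⟩ ⟨hc, hd⟩
    simp only [Set.mem_setOf_eq] at hc hd ⊢
    rcases lt_or_gt_of_ne hc with h1 | h1 <;> rcases lt_or_gt_of_ne hd with h2 | h2
    · -- c < a, d < b : α = sup, γ = inf of (a,d),(c,b)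
      refine ⟨(a, d), (c, b), ?_, ?_, ?_, ?_⟩
      · simp [Prod.le_def, not_and_or, not_le, h1]
      · simp [Prod.le_def, not_and_or, not_le, h2]
      · right; right; left
        simp [Prod.ext_iff, sup_eq_left.mpr h1.le, sup_eq_right.mpr h2.le]
      · right; right; right
        simp [Prod.ext_iff, inf_eq_right.mpr h1.le, inf_eq_left.mpr h2.le]
    · -- c < a, d > b : incomparable
      refine ⟨(a, b), (c, d), ?_, ?_, by left; rfl, by right; left; rfl⟩
      · simp [Prod.le_def, not_and_or, not_le, h1]
      · simp [Prod.le_def, not_and_or, not_le, h2]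
    · -- c > a, d < b : incomparable
      refine ⟨(a, b), (c, d), ?_, ?_, by left; rfl, by right; left; rfl⟩
      · simp [Prod.le_def, not_and_or, not_le, h2]
      · simp [Prod.le_def, not_and_or, not_le, h1]
    · -- c > a, d > b : α = inf, γ = sup of (a,d),(c,b)
      refine ⟨(a, d), (c, b), ?_, ?_, ?_, ?_⟩
      · simp [Prod.le_def, not_and_or, not_le, h2]
      · simp [Prod.le_def, not_and_or, not_le, h1]
      · right; right; right
        simp [Prod.ext_iff, inf_eq_left.mpr h1.le, inf_eq_right.mpr h2.le]
      · right; right; left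
        simp [Prod.ext_iff, sup_eq_right.mpr h1.le, sup_eq_left.mpr h2.le]
  have hT : {γ : Fin m × Fin n | γ.1 ≠ a ∧ γ.2 ≠ b}.ncard = (m - 1) * (n - 1) := by
    rw [Set.ncard_eq_toFinset_card']
    have h : {γ : Fin m × Fin n | γ.1 ≠ a ∧ γ.2 ≠ b}.toFinset = (({a}ᶜ : Finset (Fin m)) ×ˢ ({b}ᶜ : Finset (Fin n))) := by
      ext ⟨c, d⟩; simp
    rw [h, Finset.card_product, Finset.card_compl, Finset.card_compl]
    simp
  calc (m - 1) * (n - 1) = {γ : Fin m × Fin n | γ.1 ≠ a ∧ γ.2 ≠ b}.ncard := hT.symm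
    _ ≤ _ := Set.ncard_le_ncard hsub (Set.toFinite _)
end
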